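/- Under the δ-closeness of market data (K, π, S_{t0}) and (K̃, π̃, S̃_{t0}) and for a strategy with Σ(c,p,Δ) ≤ 𝔅, the costs of the strategy and its shifted version differ by at most δ̃ + δ(1+κ)𝔅 + δ𝔅: |C(Ψ^{(K̃,S̃_{t0})}_{(δ̃+δ(1+κ)𝔅+a, c, p, Δ)}, π̃) − C(Ψ^{(K,S_{t0})}_{(a,c,p,Δ)}, π)| ≤ δ̃ + δ(1+κ)𝔅 + δ𝔅. -/
import Mathlib


open MeasureTheory Filter Topology
open scoped BigOperators

/-- Payoff of a semi-static trading strategy: cash `a`, long/short call positions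
`cP/cM`, long/short put positions `pP/pM`, deterministic initial position `Δ0`,
dynamic positions `Δ i k` (for times `t_i`, `1 ≤ i ≤ n-1`, depending on the path),
with proportional transaction costs `κ`.  The future path is `s 1, …, s n`;
`S0` is the spot. -/
noncomputable def Psi (n d J : ℕ) (κ : ℝ)
    (Kc Kp : Fin n → Fin d → Fin J → ℝ) (S0 : Fin d → ℝ)
    (a : ℝ) (cP cM pP pM : Fin n → Fin d → Fin J → ℝ)
    (Δ0 : Fin d → ℝ) (Δ : ℕ → Fin d → ((ℕ → Fin d → ℝ) → ℝ))
    (s : ℕ → Fin d → ℝ) : ℝ :=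
  a
  + ∑ i : Fin n, ∑ k : Fin d, ∑ j : Fin J,
      (cP i k j - cM i k j) * max (s (i.1 + 1) k - Kc i k j) 0
  + ∑ i : Fin n, ∑ k : Fin d, ∑ j : Fin J,
      (pP i k j - pM i k j) * max (Kp i k j - s (i.1 + 1) k) 0
  + ∑ k : Fin d, (Δ0 k * (s 1 k - S0 k) - κ * |S0 k| * |Δ0 k|)
  + ∑ k : Fin d, ∑ i ∈ Finset.Ico 1 n,
      (Δ i k s * (s (i + 1) k - s i k)
        - κ * |s i k| * |Δ i k s - (if i = 1 then Δ0 k else Δ (i - 1) k s)|)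

/-- The total position size functional `Σ`. -/
noncomputable def Sig (n d J : ℕ) (cP cM pP pM : Fin n → Fin d → Fin J → ℝ)
    (Δ0 : Fin d → ℝ) (Δ : ℕ → Fin d → ((ℕ → Fin d → ℝ) → ℝ)) : ℝ :=
  (∑ i : Fin n, ∑ k : Fin d, ∑ j : Fin J,
      (cP i k j + cM i k j + pP i k j + pM i k j))
  + ∑ k : Fin d, |Δ0 k|
  + ∑ k : Fin d, ∑ i ∈ Finset.Ico 1 n, ⨆ s : ℕ → Fin d → ℝ, |Δ i k s|

/-- Cost of setting up a semi-static strategy w.r.t. bid-ask prices. -/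
noncomputable def Cost (n d J : ℕ) (a : ℝ)
    (cP cM pP pM πcP πcM πpP πpM : Fin n → Fin d → Fin J → ℝ) : ℝ :=
  a + ∑ i : Fin n, ∑ k : Fin d, ∑ j : Fin J,
        (cP i k j * πcP i k j - cM i k j * πcM i k j)
    + ∑ i : Fin n, ∑ k : Fin d, ∑ j : Fin J,
        (pP i k j * πpP i k j - pM i k j * πpM i k j)

/-- `s ∈ [0,B]^{nd}`. -/
def InBox (n d : ℕ) (B : ℝ) (s : ℕ → Fin d → ℝ) : Prop :=
  ∀ i ∈ Finset.Icc 1 n, ∀ k : Fin d, s i k ∈ Set.Icc 0 B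

/-- if bid-ask prices are componentwise `δ`-close and `Σ ≤ 𝔅`, then
the costs of a strategy and of its cash-shifted version (shift `δ̃ + δ(1+κ)𝔅`)
differ by at most `δ̃ + δ(1+κ)𝔅 + δ𝔅`. -/
theorem stmt13 (n d J : ℕ) (κ 𝔅 δ δ' : ℝ)
    (hκ : 0 ≤ κ) (hδ : 0 ≤ δ) (hδ' : 0 ≤ δ')
    (a : ℝ) (cP cM pP pM : Fin n → Fin d → Fin J → ℝ)
    (Δ0 : Fin d → ℝ) (Δ : ℕ → Fin d → ((ℕ → Fin d → ℝ) → ℝ))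
    (πcP πcM πpP πpM πcP' πcM' πpP' πpM' : Fin n → Fin d → Fin J → ℝ)
    (hcP : ∀ i k j, 0 ≤ cP i k j) (hcM : ∀ i k j, 0 ≤ cM i k j)
    (hpP : ∀ i k j, 0 ≤ pP i k j) (hpM : ∀ i k j, 0 ≤ pM i k j)
    (hSig : Sig n d J cP cM pP pM Δ0 Δ ≤ 𝔅)
    (hπ1 : ∀ i k j, |πcP i k j - πcP' i k j| < δ)
    (hπ2 : ∀ i k j, |πcM i k j - πcM' i k j| < δ)
    (hπ3 : ∀ i k j, |πpP i k j - πpP' i k j| < δ)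
    (hπ4 : ∀ i k j, |πpM i k j - πpM' i k j| < δ) :
    |Cost n d J (a + δ' + δ * (1 + κ) * 𝔅) cP cM pP pM πcP' πcM' πpP' πpM'
      - Cost n d J a cP cM pP pM πcP πcM πpP πpM|
      ≤ δ' + δ * (1 + κ) * 𝔅 + δ * 𝔅 := by

  classical
  -- abbreviate the option-size sum
  set S : ℝ := ∑ i : Fin n, ∑ k : Fin d, ∑ j : Fin J,
      (cP i k j + cM i k j + pP i k j + pM i k j) with hS
  have hSnn : 0 ≤ S := by
    apply Finset.sum_nonneg; intro i _
    apply Finset.sum_nonneg; intro k _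
    apply Finset.sum_nonneg; intro j _
    have := hcP i k j; have := hcM i k j; have := hpP i k j; have := hpM i k j
    linarith
  have hSB : S ≤ 𝔅 := by
    have h1 : 0 ≤ ∑ k : Fin d, |Δ0 k| :=
      Finset.sum_nonneg fun k _ => abs_nonneg _
    have h2 : 0 ≤ ∑ k : Fin d, ∑ i ∈ Finset.Ico 1 n, ⨆ s : ℕ → Fin d → ℝ, |Δ i k s| := by
      apply Finset.sum_nonneg; intro k _
      apply Finset.sum_nonneg; intro i _
      exact Real.iSup_nonneg fun s => abs_nonneg _
    have := hSig
    unfold Sig at this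
    linarith
  have hB : 0 ≤ 𝔅 := le_trans hSnn hSB
  -- the error sum
  set E : ℝ := (∑ i : Fin n, ∑ k : Fin d, ∑ j : Fin J,
      (cP i k j * (πcP' i k j - πcP i k j) - cM i k j * (πcM' i k j - πcM i k j)))
    + ∑ i : Fin n, ∑ k : Fin d, ∑ j : Fin J,
      (pP i k j * (πpP' i k j - πpP i k j) - pM i k j * (πpM' i k j - πpM i k j)) with hE
  have hEbound : |E| ≤ δ * S := by
    have key : ∀ (x p p' : ℝ), 0 ≤ x → |p - p'| < δ → |x * (p' - p)| ≤ x * δ := by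
      intro x p p' hx hpp
      rw [abs_mul, abs_of_nonneg hx]
      have : |p' - p| ≤ δ := by rw [abs_sub_comm]; exact le_of_lt hpp
      exact mul_le_mul_of_nonneg_left this hx
    have hterm : ∀ (i : Fin n) (k : Fin d) (j : Fin J),
        |(cP i k j * (πcP' i k j - πcP i k j) - cM i k j * (πcM' i k j - πcM i k j))
          + (pP i k j * (πpP' i k j - πpP i k j) - pM i k j * (πpM' i k j - πpM i k j))|
          ≤ δ * (cP i k j + cM i k j + pP i k j + pM i k j) := by
      intro i k j
      have h1 := key _ _ _ (hcP i k j) (hπ1 i k j)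
      have h2 := key _ _ _ (hcM i k j) (hπ2 i k j)
      have h3 := key _ _ _ (hpP i k j) (hπ3 i k j)
      have h4 := key _ _ _ (hpM i k j) (hπ4 i k j)
      calc _ ≤ |cP i k j * (πcP' i k j - πcP i k j)|
              + |cM i k j * (πcM' i k j - πcM i k j)|
              + |pP i k j * (πpP' i k j - πpP i k j)|
              + |pM i k j * (πpM' i k j - πpM i k j)| := by
              have := abs_sub (cP i k j * (πcP' i k j - πcP i k j))
                (cM i k j * (πcM' i k j - πcM i k j))
              have := abs_sub (pP i k j * (πpP' i k j - πpP i k j))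
                (pM i k j * (πpM' i k j - πpM i k j))
              have habs := abs_add_le
                ((cP i k j * (πcP' i k j - πcP i k j)) - cM i k j * (πcM' i k j - πcM i k j))
                ((pP i k j * (πpP' i k j - πpP i k j)) - pM i k j * (πpM' i k j - πpM i k j))
              linarith
        _ ≤ δ * (cP i k j + cM i k j + pP i k j + pM i k j) := by ring_nf; ring_nf at h1 h2 h3 h4; linarith
    have hcomb : |E| ≤ ∑ i : Fin n, ∑ k : Fin d, ∑ j : Fin J,
        δ * (cP i k j + cM i k j + pP i k j + pM i k j) := by
      rw [hE]
      rw [← Finset.sum_add_distrib]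
      refine le_trans (Finset.abs_sum_le_sum_abs _ _) (Finset.sum_le_sum ?_)
      intro i _
      rw [← Finset.sum_add_distrib]
      refine le_trans (Finset.abs_sum_le_sum_abs _ _) (Finset.sum_le_sum ?_)
      intro k _
      rw [← Finset.sum_add_distrib]
      refine le_trans (Finset.abs_sum_le_sum_abs _ _) (Finset.sum_le_sum ?_)
      intro j _
      exact hterm i k j
    calc |E| ≤ _ := hcomb
      _ = δ * S := by rw [hS, Finset.mul_sum]; congr 1; ext i;
                      rw [Finset.mul_sum]; congr 1; ext k; rw [Finset.mul_sum]
  have hdiff : Cost n d J (a + δ' + δ * (1 + κ) * 𝔅) cP cM pP pM πcP' πcM' πpP' πpM'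
      - Cost n d J a cP cM pP pM πcP πcM πpP πpM
      = (δ' + δ * (1 + κ) * 𝔅) + E := by
    unfold Cost
    rw [hE]
    have e1 : ∑ i : Fin n, ∑ k : Fin d, ∑ j : Fin J,
        (cP i k j * (πcP' i k j - πcP i k j) - cM i k j * (πcM' i k j - πcM i k j))
        = (∑ i : Fin n, ∑ k : Fin d, ∑ j : Fin J,
            (cP i k j * πcP' i k j - cM i k j * πcM' i k j))
          - ∑ i : Fin n, ∑ k : Fin d, ∑ j : Fin J,
            (cP i k j * πcP i k j - cM i k j * πcM i k j) := by
      rw [← Finset.sum_sub_distrib]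
      refine Finset.sum_congr rfl fun i _ => ?_
      rw [← Finset.sum_sub_distrib]
      refine Finset.sum_congr rfl fun k _ => ?_
      rw [← Finset.sum_sub_distrib]
      exact Finset.sum_congr rfl fun j _ => by ring
    have e2 : ∑ i : Fin n, ∑ k : Fin d, ∑ j : Fin J,
        (pP i k j * (πpP' i k j - πpP i k j) - pM i k j * (πpM' i k j - πpM i k j))
        = (∑ i : Fin n, ∑ k : Fin d, ∑ j : Fin J,
            (pP i k j * πpP' i k j - pM i k j * πpM' i k j))
          - ∑ i : Fin n, ∑ k : Fin d, ∑ j : Fin J,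
            (pP i k j * πpP i k j - pM i k j * πpM i k j) := by
      rw [← Finset.sum_sub_distrib]
      refine Finset.sum_congr rfl fun i _ => ?_
      rw [← Finset.sum_sub_distrib]
      refine Finset.sum_congr rfl fun k _ => ?_
      rw [← Finset.sum_sub_distrib]
      exact Finset.sum_congr rfl fun j _ => by ring
    rw [e1, e2]; ring
  rw [hdiff]
  have hT : 0 ≤ δ' + δ * (1 + κ) * 𝔅 := by positivity
  calc |(δ' + δ * (1 + κ) * 𝔅) + E| ≤ |δ' + δ * (1 + κ) * 𝔅| + |E| := abs_add_le _ _
    _ ≤ (δ' + δ * (1 + κ) * 𝔅) + δ * S := by rw [abs_of_nonneg hT]; linarith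
    _ ≤ δ' + δ * (1 + κ) * 𝔅 + δ * 𝔅 := by nlinarith
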